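/- The operation f : A^{m^{2^n}+1} → A is a near-unanimity operation: for all x, y ∈ A, f applied to any tuple all of whose coordinates equal x except at most one coordinate equal to y returns x. -/

import Mathlib

/- The universe `A = {a, 0, 1, ..., n}` of size `n+2` is encoded as `Fin (n+2)`,
where `a` is encoded as `0` and the element `i ∈ {0, ..., n}` is encoded as `i+1`. -/

/-- `L_r(x)`: the number of coordinates of `x` whose value is strictly less than
the element `r` in the order `a < 0 < 1 < ⋯ < n` (encoded: value `< r + 1`);
for `r = n+1` this counts all coordinates. -/
def Lcnt (n : ℕ) {K : ℕ} (x : Fin K → Fin (n + 2)) (r : ℕ) : ℕ :=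
  (Finset.univ.filter (fun q => (x q).val < r + 1)).card

/-- `F_x = {r ∈ {0, …, n} : L_{r+1}(x) > m^(2^r) · L_r(x)}`. -/
def FsetA (n m : ℕ) {K : ℕ} (x : Fin K → Fin (n + 2)) : Finset ℕ :=
  (Finset.range (n + 1)).filter (fun r => m ^ 2 ^ r * Lcnt n x r < Lcnt n x (r + 1))

/-- The operation `f : A^(m^(2^n)+1) → A`: `f(x) = max F_x` if `F_x ≠ ∅` (the
element `max F_x`, encoded as `max F_x + 1`), and `f(x) = a` otherwise. -/
def fop (n m : ℕ) (x : Fin (m ^ 2 ^ n + 1) → Fin (n + 2)) : Fin (n + 2) :=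
  if h : (FsetA n m x).Nonempty then
    ⟨(FsetA n m x).max' h + 1, by
      have hmem := (FsetA n m x).max'_mem h
      have h2 : (FsetA n m x).max' h < n + 1 :=
        Finset.mem_range.mp (Finset.mem_filter.mp hmem).1
      omega⟩
  else 0

/-- The operation `f` is a near-unanimity operation: for all `x, y ∈ A`, `f` applied
to any tuple all of whose coordinates equal `x` except at most one coordinate
(position `j`) equal to `y` returns `x`. -/
theorem stmt9 (n m : ℕ) (hm : 2 ≤ m) (x y : Fin (n + 2))
    (j : Fin (m ^ 2 ^ n + 1)) (w : Fin (m ^ 2 ^ n + 1) → Fin (n + 2))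
    (hw : ∀ q, q ≠ j → w q = x) (hwj : w j = x ∨ w j = y) :
    fop n m w = x := by
  -- upper bound: Lcnt ≤ K
  have hle : ∀ r, Lcnt n w r ≤ m ^ 2 ^ n + 1 := by
    intro r
    calc Lcnt n w r ≤ Finset.univ.card := Finset.card_filter_le _ _
    _ = m ^ 2 ^ n + 1 := by simp
  -- if x.val ≥ r+1 then Lcnt ≤ 1
  have hub : ∀ r : ℕ, r + 1 ≤ (x : ℕ) → Lcnt n w r ≤ 1 := by
    intro r hr
    have hsub : Finset.univ.filter (fun q => (w q).val < r + 1) ⊆ {j} := by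
      intro q hq
      simp only [Finset.mem_filter, Finset.mem_univ, true_and] at hq
      simp only [Finset.mem_singleton]
      by_contra hqj
      rw [hw q hqj] at hq
      omega
    simpa [Lcnt] using Finset.card_le_card hsub
  -- if x.val < r+1 then Lcnt ≥ m^(2^n)
  have hlb : ∀ r : ℕ, (x : ℕ) < r + 1 → m ^ 2 ^ n ≤ Lcnt n w r := by
    intro r hr
    have hsub : ({j}ᶜ : Finset (Fin (m ^ 2 ^ n + 1))) ⊆
        Finset.univ.filter (fun q => (w q).val < r + 1) := by
      intro q hq
      simp only [Finset.mem_compl, Finset.mem_singleton] at hq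
      simp only [Finset.mem_filter, Finset.mem_univ, true_and]
      rw [hw q hq]
      exact hr
    have h1 := Finset.card_le_card hsub
    rw [Finset.card_compl, Finset.card_singleton, Fintype.card_fin] at h1
    unfold Lcnt
    omega
  have htop : Lcnt n w (n + 1) = m ^ 2 ^ n + 1 := by
    unfold Lcnt
    rw [Finset.filter_true_of_mem (fun q _ => (w q).isLt)]
    simp
  have hmm : ∀ r : ℕ, 2 ≤ m ^ 2 ^ r := by
    intro r
    calc 2 = 2 ^ 1 := rfl
    _ ≤ m ^ 2 ^ r := Nat.pow_le_pow_left hm (2 ^ r) |>.trans'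
        (Nat.pow_le_pow_right (by omega) (Nat.one_le_two_pow))
  have hb : 1 ≤ m ^ 2 ^ n := Nat.one_le_pow _ _ (by omega)
  -- main case split on x.val
  rcases Nat.eq_zero_or_pos (x : ℕ) with hx0 | hxpos
  · -- x = a : F is empty
    have hF : ¬ (FsetA n m w).Nonempty := by
      rw [Finset.nonempty_iff_ne_empty]
      simp only [ne_eq, not_not]
      apply Finset.filter_false_of_mem
      intro r _
      have h1 : m ^ 2 ^ n ≤ Lcnt n w r := hlb r (by omega)
      have h2 : Lcnt n w (r + 1) ≤ m ^ 2 ^ n + 1 := hle (r + 1)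
      have h3 : 2 ≤ m ^ 2 ^ r := hmm r
      have h4 : 2 * (m ^ 2 ^ n) ≤ m ^ 2 ^ r * Lcnt n w r :=
        Nat.mul_le_mul h3 h1
      omega
    rw [fop, dif_neg hF]
    exact (Fin.ext hx0.symm)
  · -- x = i + 1
    obtain ⟨i, hi⟩ : ∃ i, (x : ℕ) = i + 1 := ⟨(x : ℕ) - 1, by omega⟩
    have hin : i < n + 1 := by have := x.isLt; omega
    have hiF : i ∈ FsetA n m w := by
      rw [FsetA, Finset.mem_filter]
      refine ⟨Finset.mem_range.mpr hin, ?_⟩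
      have h1 : Lcnt n w i ≤ 1 := hub i (by omega)
      have h2 : m ^ 2 ^ i * Lcnt n w i ≤ m ^ 2 ^ i :=
        (Nat.mul_le_mul_left _ h1).trans_eq (Nat.mul_one _)
      rcases Nat.lt_or_ge i n with hlt | hge
      · have h3 : m ^ 2 ^ n ≤ Lcnt n w (i + 1) := hlb (i + 1) (by omega)
        have h4 : m ^ 2 ^ i < m ^ 2 ^ n :=
          Nat.pow_lt_pow_right (by omega) (Nat.pow_lt_pow_right one_lt_two hlt)
        omega
      · have hieq : i = n := by omega
        subst hieq
        rw [htop]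
        omega
    have hne : (FsetA n m w).Nonempty := ⟨i, hiF⟩
    have hmax : (FsetA n m w).max' hne = i := by
      apply le_antisymm
      · apply Finset.max'_le
        intro r hr
        by_contra hri
        push_neg at hri
        rw [FsetA, Finset.mem_filter, Finset.mem_range] at hr
        obtain ⟨hrn, hrlt⟩ := hr
        have h1 : m ^ 2 ^ n ≤ Lcnt n w r := hlb r (by omega)
        have h2 : Lcnt n w (r + 1) ≤ m ^ 2 ^ n + 1 := hle (r + 1)
        have h43 : 2 * (m ^ 2 ^ n) ≤ m ^ 2 ^ r * Lcnt n w r :=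
          Nat.mul_le_mul (hmm r) h1
        omega
      · exact Finset.le_max' _ i hiF
    rw [fop, dif_pos hne]
    apply Fin.ext
    simp [hmax, hi]
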